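/- There exists a constant C > 0 such that for every integer n ≥ 1 and every integer k with |k − n/2| < n/4, one has | exp( n(J(k/n) − log 2) ) − exp( −(2k−n)^4/(12 n³) ) · ( 1 − (2k−n)^6/(30 n^5) ) | ≤ C · exp( −(2k−n)^4/(12 n³) ) · ( (2k−n)^8/n^7 + (2k−n)^{12}/n^{10} + (2k−n)^{14}/n^{12} ). -/

import Mathlib

/-- The entropy-like function `I(t) = (t-1) log(1-t) - t log t`. -/
noncomputable def Ifun (t : ℝ) : ℝ := (t - 1) * Real.log (1 - t) - t * Real.log t

/-- `J(t) = I(t) + (2t-1)²/2`. -/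
noncomputable def Jfun (t : ℝ) : ℝ := Ifun t + (2 * t - 1) ^ 2 / 2

/-- `gF1` is the derivative of `gF`. -/
noncomputable def gF1 (x : ℝ) : ℝ :=
  (Real.log (1 + x) - Real.log (1 - x)) / 2 - x - x ^ 3 / 3 - x ^ 5 / 5

/-- `gF x = ((1+x)log(1+x)+(1-x)log(1-x))/2 - x²/2 - x⁴/12 - x⁶/30`, the remainder. -/
noncomputable def gF (x : ℝ) : ℝ :=
  ((1 + x) * Real.log (1 + x) + (1 - x) * Real.log (1 - x)) / 2
    - x ^ 2 / 2 - x ^ 4 / 12 - x ^ 6 / 30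

lemma hasDerivAt_gF1 {x : ℝ} (h1 : -1 < x) (h2 : x < 1) :
    HasDerivAt gF1 (x ^ 6 / (1 - x ^ 2)) x := by
  have hp : (0:ℝ) < 1 + x := by linarith
  have hm : (0:ℝ) < 1 - x := by linarith
  have d1 : HasDerivAt (fun y : ℝ => Real.log (1 + y)) (1 / (1 + x)) x := by
    simpa using ((hasDerivAt_id x).const_add 1).log (ne_of_gt hp)
  have d2 : HasDerivAt (fun y : ℝ => Real.log (1 - y)) ((-1) / (1 - x)) x := by
    simpa using ((hasDerivAt_id x).const_sub 1).log (ne_of_gt hm)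
  have d : HasDerivAt gF1
      ((1 / (1 + x) - (-1) / (1 - x)) / 2 - 1 - (3:ℕ) * x ^ 2 / 3 - (5:ℕ) * x ^ 4 / 5) x := by
    have := ((((d1.sub d2).div_const 2).sub (hasDerivAt_id x)).sub
      ((hasDerivAt_pow 3 x).div_const 3)).sub ((hasDerivAt_pow 5 x).div_const 5)
    delta gF1
    simpa [Pi.sub_def] using this
  convert d using 1
  have hq : (0:ℝ) < 1 - x ^ 2 := by nlinarith
  field_simp
  ring

lemma hasDerivAt_gF {x : ℝ} (h1 : -1 < x) (h2 : x < 1) :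
    HasDerivAt gF (gF1 x) x := by
  have hp : (0:ℝ) < 1 + x := by linarith
  have hm : (0:ℝ) < 1 - x := by linarith
  have d1 : HasDerivAt (fun y : ℝ => Real.log (1 + y)) (1 / (1 + x)) x := by
    simpa using ((hasDerivAt_id x).const_add 1).log (ne_of_gt hp)
  have d2 : HasDerivAt (fun y : ℝ => Real.log (1 - y)) ((-1) / (1 - x)) x := by
    simpa using ((hasDerivAt_id x).const_sub 1).log (ne_of_gt hm)
  have e1 : HasDerivAt (fun y : ℝ => (1 + y) * Real.log (1 + y))
      (1 * Real.log (1 + x) + (1 + x) * (1 / (1 + x))) x :=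
    ((hasDerivAt_id x).const_add 1).mul d1
  have e2 : HasDerivAt (fun y : ℝ => (1 - y) * Real.log (1 - y))
      ((-1) * Real.log (1 - x) + (1 - x) * ((-1) / (1 - x))) x := by
    have := ((hasDerivAt_id x).const_sub 1).mul d2
    simpa [Pi.mul_def] using this
  have d : HasDerivAt gF
      ((1 * Real.log (1 + x) + (1 + x) * (1 / (1 + x)) +
        ((-1) * Real.log (1 - x) + (1 - x) * ((-1) / (1 - x)))) / 2
        - (2:ℕ) * x ^ 1 / 2 - (4:ℕ) * x ^ 3 / 12 - (6:ℕ) * x ^ 5 / 30) x := by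
    have := ((((e1.add e2).div_const 2).sub ((hasDerivAt_pow 2 x).div_const 2)).sub
      ((hasDerivAt_pow 4 x).div_const 12)).sub ((hasDerivAt_pow 6 x).div_const 30)
    delta gF
    simpa [Pi.sub_def] using this
  convert d using 1
  unfold gF1
  field_simp
  ring

lemma mono_aux {f f' : ℝ → ℝ}
    (hf : ∀ x ∈ Set.Icc (0:ℝ) (1/2), HasDerivAt f (f' x) x)
    (h0 : ∀ x ∈ Set.Ioo (0:ℝ) (1/2), 0 ≤ f' x) :
    ∀ x ∈ Set.Icc (0:ℝ) (1/2), f 0 ≤ f x := by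
  have hmono : MonotoneOn f (Set.Icc 0 (1/2)) := by
    apply monotoneOn_of_deriv_nonneg (convex_Icc _ _)
    · exact fun x hx => (hf x hx).differentiableAt.continuousAt.continuousWithinAt
    · intro x hx
      rw [interior_Icc] at hx
      exact (hf x (Set.mem_Icc_of_Ioo hx)).differentiableAt.differentiableWithinAt
    · intro x hx
      rw [interior_Icc] at hx
      rw [(hf x (Set.mem_Icc_of_Ioo hx)).deriv]
      exact h0 x hx
  intro x hx
  exact hmono (Set.left_mem_Icc.2 (by norm_num)) hx hx.1

lemma gF1_bounds : ∀ x ∈ Set.Icc (0:ℝ) (1/2), 0 ≤ gF1 x ∧ gF1 x ≤ 4 * x ^ 7 / 21 := by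
  have hlow := mono_aux (f' := fun x => x ^ 6 / (1 - x ^ 2))
    (fun x hx => hasDerivAt_gF1 (by linarith [hx.1]) (by linarith [hx.2]))
    (fun x hx => by
      have : (0:ℝ) < 1 - x ^ 2 := by nlinarith [hx.1, hx.2]
      positivity)
  have hupp := mono_aux (f := fun x => 4 * x ^ 7 / 21 - gF1 x)
    (f' := fun x => 4 * x ^ 6 / 3 - x ^ 6 / (1 - x ^ 2))
    (fun x hx => by
      have h := ((hasDerivAt_pow 7 x).const_mul 4).div_const 21 |>.sub
        (hasDerivAt_gF1 (by linarith [hx.1]) (by linarith [hx.2]))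
      refine h.congr_deriv ?_
      push_cast
      ring)
    (fun x hx => by
      have h1 : (0:ℝ) < 1 - x ^ 2 := by nlinarith [hx.1, hx.2]
      have h2 : (3:ℝ)/4 ≤ 1 - x ^ 2 := by nlinarith [hx.1, hx.2]
      have h3 : x ^ 6 / (1 - x ^ 2) ≤ x ^ 6 / (3/4) :=
        div_le_div_of_nonneg_left (by positivity) (by norm_num) h2
      have : x ^ 6 / (3/4) = 4 * x ^ 6 / 3 := by ring
      linarith)
  intro x hx
  have h0 : gF1 0 = 0 := by simp [gF1]
  refine ⟨by simpa [h0] using hlow x hx, ?_⟩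
  have := hupp x hx
  simp [h0] at this
  linarith

lemma gF_bounds : ∀ x ∈ Set.Icc (0:ℝ) (1/2), 0 ≤ gF x ∧ gF x ≤ x ^ 8 / 42 := by
  have hlow := mono_aux (f' := gF1)
    (fun x hx => hasDerivAt_gF (by linarith [hx.1]) (by linarith [hx.2]))
    (fun x hx => (gF1_bounds x (Set.mem_Icc_of_Ioo hx)).1)
  have hupp := mono_aux (f := fun x => x ^ 8 / 42 - gF x)
    (f' := fun x => 4 * x ^ 7 / 21 - gF1 x)
    (fun x hx => by
      have h := ((hasDerivAt_pow 8 x).div_const 42).sub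
        (hasDerivAt_gF (h1 := by linarith [hx.1]) (h2 := by linarith [hx.2]))
      refine h.congr_deriv ?_
      push_cast
      ring)
    (fun x hx => by
      have := (gF1_bounds x (Set.mem_Icc_of_Ioo hx)).2
      linarith)
  intro x hx
  have h0 : gF 0 = 0 := by simp [gF]
  refine ⟨by simpa [h0] using hlow x hx, ?_⟩
  have := hupp x hx
  simp [h0] at this
  linarith

lemma gF_even (x : ℝ) : gF (-x) = gF x := by
  unfold gF
  rw [show (1:ℝ) + -x = 1 - x by ring, show (1:ℝ) - -x = 1 + x by ring]
  ring

lemma gF_bounds' (x : ℝ) (hx : |x| ≤ 1/2) : 0 ≤ gF x ∧ gF x ≤ x ^ 8 / 42 := by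
  rcases le_or_gt 0 x with h | h
  · exact gF_bounds x ⟨h, by rwa [abs_of_nonneg h] at hx⟩
  · have hx' : -x ∈ Set.Icc (0:ℝ) (1/2) := ⟨by linarith, by rwa [abs_of_neg h] at hx⟩
    have := gF_bounds (-x) hx'
    rw [gF_even, show (-x)^8 = x^8 by ring] at this
    exact this

lemma exp_core (A B r T1 T2 T3 : ℝ) (hB : 0 ≤ B) (hr : 0 ≤ r)
    (hT2 : B ^ 2 ≤ T2) (hT1 : r ≤ T1) (hT3 : 0 ≤ T3) :
    |Real.exp (-A - B - r) - Real.exp (-A) * (1 - B)| ≤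
      1 * Real.exp (-A) * (T1 + T2 + T3) := by
  have key : |Real.exp (-(B + r)) - (1 - B)| ≤ B ^ 2 + r := by
    have hlow : 1 - (B + r) ≤ Real.exp (-(B + r)) := by
      have := Real.add_one_le_exp (-(B + r)); linarith
    have hupp : Real.exp (-(B + r)) - (1 - B) ≤ B ^ 2 := by
      have h1 : B + 1 ≤ Real.exp B := Real.add_one_le_exp B
      have h2 : Real.exp (-(B + r)) ≤ Real.exp (-B) := Real.exp_le_exp.2 (by linarith)
      have hEpos : (0:ℝ) < Real.exp B := Real.exp_pos B
      have h3 : Real.exp (-B) = (Real.exp B)⁻¹ := Real.exp_neg B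
      have h4 : (Real.exp B)⁻¹ ≤ (1 + B)⁻¹ := by
        apply inv_anti₀ (by linarith) (by linarith)
      have h5 : (1 + B)⁻¹ - (1 - B) ≤ B ^ 2 := by
        have hb1 : (0:ℝ) < 1 + B := by linarith
        have hc : (1 + B) * (1 + B)⁻¹ = 1 := mul_inv_cancel₀ (ne_of_gt hb1)
        nlinarith [sq_nonneg B]
      linarith
    rw [abs_le]
    constructor <;> nlinarith
  have hrew : Real.exp (-A - B - r) = Real.exp (-A) * Real.exp (-(B + r)) := by
    rw [← Real.exp_add]; ring_nf
  rw [hrew, ← mul_sub, abs_mul, abs_of_pos (Real.exp_pos _)]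
  have := mul_le_mul_of_nonneg_left key (Real.exp_pos (-A)).le
  calc Real.exp (-A) * |Real.exp (-(B + r)) - (1 - B)| ≤ Real.exp (-A) * (B ^ 2 + r) := this
    _ ≤ 1 * Real.exp (-A) * (T1 + T2 + T3) := by
        rw [one_mul]
        apply mul_le_mul_of_nonneg_left _ (Real.exp_pos (-A)).le
        linarith

theorem exp_nJ_expansion :
    ∃ C : ℝ, 0 < C ∧ ∀ n : ℕ, 1 ≤ n → ∀ k : ℕ, |(k : ℝ) - n / 2| < (n : ℝ) / 4 →
      |Real.exp (n * (Jfun ((k : ℝ) / n) - Real.log 2)) -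
          Real.exp (-(2 * (k : ℝ) - n) ^ 4 / (12 * (n : ℝ) ^ 3)) *
            (1 - (2 * (k : ℝ) - n) ^ 6 / (30 * (n : ℝ) ^ 5))| ≤
        C * Real.exp (-(2 * (k : ℝ) - n) ^ 4 / (12 * (n : ℝ) ^ 3)) *
          ((2 * (k : ℝ) - n) ^ 8 / (n : ℝ) ^ 7 + (2 * (k : ℝ) - n) ^ 12 / (n : ℝ) ^ 10 +
            (2 * (k : ℝ) - n) ^ 14 / (n : ℝ) ^ 12) := by
  refine ⟨1, one_pos, fun n hn k hk => ?_⟩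
  have hn0 : (0:ℝ) < n := by exact_mod_cast Nat.pos_of_ne_zero (by omega)
  set u : ℝ := 2 * (k:ℝ) - n with hu
  set x : ℝ := u / n with hxdef
  have hux : u = n * x := by rw [hxdef]; field_simp
  have huabs : |u| < n / 2 := by
    have : |u| = 2 * |(k:ℝ) - n / 2| := by
      rw [show u = 2 * ((k:ℝ) - n / 2) by rw [hu]; ring, abs_mul]
      norm_num
    rw [this]; linarith
  have hxabs : |x| ≤ 1 / 2 := by
    rw [hxdef, abs_div, abs_of_pos hn0, div_le_iff₀ hn0]
    linarith
  have hx1 : -1 < x := by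
    have := abs_le.1 hxabs; linarith [this.1]
  have hx2 : x < 1 := by
    have := abs_le.1 hxabs; linarith [this.2]
  have hpx : (0:ℝ) < 1 + x := by linarith
  have hmx : (0:ℝ) < 1 - x := by linarith
  have hkn : (k:ℝ) / n = (1 + x) / 2 := by
    rw [hxdef, hu]; field_simp; ring
  have hJ : Jfun ((k:ℝ) / n) - Real.log 2 = -(x ^ 4 / 12 + x ^ 6 / 30 + gF x) := by
    rw [hkn]
    unfold Jfun Ifun gF
    rw [show (1:ℝ) - (1 + x) / 2 = (1 - x) / 2 by ring]
    rw [Real.log_div (ne_of_gt hmx) two_ne_zero, Real.log_div (ne_of_gt hpx) two_ne_zero]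
    ring
  have hexp : (n:ℝ) * (Jfun ((k:ℝ) / n) - Real.log 2)
      = -(u ^ 4 / (12 * n ^ 3)) - u ^ 6 / (30 * n ^ 5) - n * gF x := by
    rw [hJ, hux]
    field_simp
    ring
  rw [hexp, show -u ^ 4 / (12 * (n:ℝ) ^ 3) = -(u ^ 4 / (12 * (n:ℝ) ^ 3)) by ring]
  have hgF := gF_bounds' x hxabs
  apply exp_core
  · positivity
  · exact mul_nonneg hn0.le hgF.1
  · have h1 : (u ^ 6 / (30 * (n:ℝ) ^ 5)) ^ 2 = u ^ 12 / (900 * n ^ 10) := by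
      field_simp; ring
    rw [h1]
    apply div_le_div_of_nonneg_left (by positivity) (by positivity)
    nlinarith [pow_pos hn0 10]
  · have h1 : (n:ℝ) * gF x ≤ n * (x ^ 8 / 42) :=
      mul_le_mul_of_nonneg_left hgF.2 hn0.le
    have h2 : (n:ℝ) * (x ^ 8 / 42) = u ^ 8 / (42 * n ^ 7) := by
      rw [hux]; field_simp
    have h3 : u ^ 8 / (42 * (n:ℝ) ^ 7) ≤ u ^ 8 / n ^ 7 := by
      apply div_le_div_of_nonneg_left (by positivity) (by positivity)
      nlinarith [pow_pos hn0 7]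
    linarith
  · positivity
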